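/- Let R0 ≥ 1 and suppose r : [0, h] → ℝ is C¹, r(0) ≤ R0, r(t) ≥ 0, and r'(t) ≤ 2·r(t)³ whenever r(t) ≥ 1, where h = 1/(8R0²). Then r(t) ≤ √2·R0 for all t ∈ [0, h]. -/

import Mathlib

theorem stmt_8 (R0 h : ℝ) (r r' : ℝ → ℝ)
    (hR0 : 1 ≤ R0) (hh : h = 1 / (8 * R0 ^ 2))
    (hC1 : ∀ t ∈ Set.Icc 0 h, HasDerivAt r (r' t) t)
    (hcont : ContinuousOn r' (Set.Icc 0 h))
    (hr0 : r 0 ≤ R0)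
    (hpos : ∀ t ∈ Set.Icc 0 h, 0 ≤ r t)
    (hineq : ∀ t ∈ Set.Icc 0 h, 1 ≤ r t → r' t ≤ 2 * (r t) ^ 3) :
    ∀ t ∈ Set.Icc 0 h, r t ≤ Real.sqrt 2 * R0 := by
  have hR0pos : (0:ℝ) < R0 := lt_of_lt_of_le one_pos hR0
  have hsqrt2 : (1:ℝ) ≤ Real.sqrt 2 := by
    rw [show (1:ℝ) = Real.sqrt 1 from Real.sqrt_one.symm]
    exact Real.sqrt_le_sqrt (by norm_num)
  have hsq2 : Real.sqrt 2 ^ 2 = 2 := Real.sq_sqrt (by norm_num)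
  intro t ht
  obtain ⟨ht0, hth⟩ := ht
  by_cases hcase : r t ≤ R0
  · calc r t ≤ R0 := hcase
      _ ≤ Real.sqrt 2 * R0 := by nlinarith
  push_neg at hcase
  -- the set of times ≤ t where r ≤ R0
  set A : Set ℝ := Set.Icc 0 t ∩ r ⁻¹' (Set.Iic R0) with hA
  have hrc : ContinuousOn r (Set.Icc 0 h) := fun s hs =>
    (hC1 s hs).continuousAt.continuousWithinAt
  have hsub : Set.Icc 0 t ⊆ Set.Icc 0 h := Set.Icc_subset_Icc le_rfl hth
  have hA_closed : IsClosed A :=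
    (hrc.mono hsub).preimage_isClosed_of_isClosed isClosed_Icc isClosed_Iic
  have hA_ne : A.Nonempty := ⟨0, ⟨le_rfl, ht0⟩, hr0⟩
  have hA_bdd : BddAbove A := ⟨t, fun s hs => hs.1.2⟩
  set t0 := sSup A with ht0def
  have ht0A : t0 ∈ A := hA_closed.csSup_mem hA_ne hA_bdd
  have ht0mem : t0 ∈ Set.Icc 0 h := hsub ht0A.1
  have ht0lt : t0 < t := lt_of_le_of_ne ht0A.1.2 (by
    intro heq
    have := ht0A.2
    rw [heq] at this
    exact absurd this (not_le.mpr hcase))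
  have hgt : ∀ s ∈ Set.Ioc t0 t, R0 < r s := by
    intro s hs
    by_contra hle
    push_neg at hle
    have hsA : s ∈ A := ⟨⟨le_trans ht0A.1.1 hs.1.le, hs.2⟩, hle⟩
    exact absurd (le_csSup hA_bdd hsA) (not_le.mpr hs.1)
  have hrt0 : r t0 = R0 := by
    refine le_antisymm ht0A.2 ?_
    have tends : Filter.Tendsto r (nhdsWithin t0 (Set.Ioi t0)) (nhds (r t0)) :=
      (hC1 t0 ht0mem).continuousAt.tendsto.mono_left nhdsWithin_le_nhds
    refine ge_of_tendsto tends ?_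
    exact Filter.eventually_of_mem (Ioc_mem_nhdsGT ht0lt)
      (fun s hs => (hgt s hs).le)
  -- r ≥ 1 on [t0, t]
  have hge1 : ∀ s ∈ Set.Icc t0 t, 1 ≤ r s := by
    intro s hs
    rcases eq_or_lt_of_le hs.1 with heq | hlt
    · rw [← heq, hrt0]; exact hR0
    · exact le_trans hR0 (hgt s ⟨hlt, hs.2⟩).le
  have hsub2 : Set.Icc t0 t ⊆ Set.Icc 0 h :=
    Set.Icc_subset_Icc ht0mem.1 hth
  have hrpos : ∀ s ∈ Set.Icc t0 t, (0:ℝ) < r s := fun s hs =>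
    lt_of_lt_of_le one_pos (hge1 s hs)
  -- the function g = (r)⁻² + 4s is monotone on [t0, t]
  set g : ℝ → ℝ := fun s => (r s)⁻¹ ^ 2 + 4 * s with hg
  have hderiv : ∀ s ∈ Set.Ioo t0 t, HasDerivAt g
      (2 * (r s)⁻¹ ^ 1 * (-r' s / r s ^ 2) + 4) s := by
    intro s hs
    have hsmem : s ∈ Set.Icc t0 t := Set.Ioo_subset_Icc_self hs
    have hne : r s ≠ 0 := (hrpos s hsmem).ne'
    have h1 : HasDerivAt (fun u => (r u)⁻¹) (-r' s / r s ^ 2) s :=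
      (hC1 s (hsub2 hsmem)).inv hne
    have h2 : HasDerivAt (fun u => (r u)⁻¹ ^ 2)
        (2 * (r s)⁻¹ ^ 1 * (-r' s / r s ^ 2)) s := by
      simpa [Pi.pow_def] using h1.pow 2
    have h3 : HasDerivAt (fun u : ℝ => 4 * u) 4 s := by
      simpa using (hasDerivAt_id s).const_mul (4:ℝ)
    exact h2.add h3
  have hmono : MonotoneOn g (Set.Icc t0 t) := by
    apply monotoneOn_of_deriv_nonneg (convex_Icc t0 t)
    · apply ContinuousOn.add
      · exact ((hrc.mono hsub2).inv₀ (fun s hs => (hrpos s hs).ne')).pow 2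
      · exact (continuousOn_const.mul continuousOn_id)
    · rw [interior_Icc]
      intro s hs
      exact (hderiv s hs).differentiableAt.differentiableWithinAt
    · rw [interior_Icc]
      intro s hs
      rw [(hderiv s hs).deriv]
      have hsmem : s ∈ Set.Icc t0 t := Set.Ioo_subset_Icc_self hs
      have h1 : 1 ≤ r s := hge1 s hsmem
      have hle : r' s ≤ 2 * r s ^ 3 := hineq s (hsub2 hsmem) h1
      have hne : r s * (r s)⁻¹ = 1 := mul_inv_cancel₀ (by linarith)
      have hrsp : (0:ℝ) < r s := by linarith
      have hinvpos : (0:ℝ) < (r s)⁻¹ := inv_pos.mpr hrsp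
      -- goal : 0 ≤ 2 * (r s)⁻¹ ^ 1 * (-r' s / r s ^ 2) + 4
      have hdiv : -r' s / r s ^ 2 = -r' s * ((r s)⁻¹ * (r s)⁻¹) := by
        rw [div_eq_mul_inv, sq, mul_inv]
      rw [hdiv, pow_one]
      have hkey2 := mul_le_mul_of_nonneg_left hle
        (by positivity : (0:ℝ) ≤ (r s)⁻¹ * (r s)⁻¹ * (r s)⁻¹)
      have hcube : (r s)⁻¹ * (r s)⁻¹ * (r s)⁻¹ * r s ^ 3 = 1 := by
        calc (r s)⁻¹ * (r s)⁻¹ * (r s)⁻¹ * r s ^ 3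
            = (r s * (r s)⁻¹) * (r s * (r s)⁻¹) * (r s * (r s)⁻¹) := by ring
          _ = 1 := by rw [hne]; norm_num
      nlinarith [hkey2, hcube]
  have hkey : g t0 ≤ g t :=
    hmono ⟨le_rfl, ht0lt.le⟩ ⟨ht0lt.le, le_rfl⟩ ht0lt.le
  -- unfold
  have hrt : R0 < r t := hcase
  have hrtpos : (0:ℝ) < r t := lt_trans hR0pos hrt
  have hrtne : r t * (r t)⁻¹ = 1 := mul_inv_cancel₀ hrtpos.ne'
  have hR0ne : R0 * R0⁻¹ = 1 := mul_inv_cancel₀ hR0pos.ne'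
  have hg0 : g t0 = R0⁻¹ ^ 2 + 4 * t0 := by rw [hg]; simp [hrt0]
  have hgt' : g t = (r t)⁻¹ ^ 2 + 4 * t := rfl
  rw [hg0, hgt'] at hkey
  have htdiff : t - t0 ≤ h := by
    have : 0 ≤ t0 := ht0mem.1
    linarith
  have hhval : h = 1 / (8 * R0 ^ 2) := hh
  -- from hkey : R0⁻¹^2 + 4 t0 ≤ (r t)⁻¹^2 + 4 t
  -- get (r t)⁻¹^2 ≥ R0⁻¹^2 - 4 h ≥ 1/(2 R0^2)
  have hinv : 1 / (2 * R0 ^ 2) ≤ (r t)⁻¹ ^ 2 := by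
    have h4 : 4 * (t - t0) ≤ 4 * h := by linarith
    have : R0⁻¹ ^ 2 - 4 * h ≤ (r t)⁻¹ ^ 2 := by linarith
    have hR0inv : R0⁻¹ ^ 2 = 1 / R0 ^ 2 := by field_simp
    rw [hR0inv, hhval] at this
    have hR0sq : (0:ℝ) < R0 ^ 2 := by positivity
    calc 1 / (2 * R0 ^ 2) = 1 / R0 ^ 2 - 4 * (1 / (8 * R0 ^ 2)) := by
          field_simp; ring
      _ ≤ (r t)⁻¹ ^ 2 := this
  -- hence r t ^ 2 ≤ 2 R0 ^ 2
  have hsq : r t ^ 2 ≤ 2 * R0 ^ 2 := by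
    have hR0sq : (0:ℝ) < R0 ^ 2 := by positivity
    have hrtsq : (0:ℝ) < r t ^ 2 := by positivity
    have hsimp : (r t)⁻¹ ^ 2 * r t ^ 2 = 1 := by
      rw [← mul_pow, inv_mul_cancel₀ hrtpos.ne', one_pow]
    have h5 := mul_le_mul_of_nonneg_right hinv hrtsq.le
    rw [hsimp] at h5
    have hC : (2 * R0 ^ 2) * (1 / (2 * R0 ^ 2)) = 1 := by field_simp
    nlinarith [h5, hC, hrtsq, hR0sq]
  nlinarith [hsq2, hsqrt2, mul_pos (lt_of_lt_of_le one_pos hsqrt2) hR0pos]
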